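/- For any real θ and natural numbers m, q, k with q ≤ k < m−q−1, the sum (1/m) ∑_{ℓ=0}^{m-1} (sin((θ+πℓ)/m))^{2k+1} · sin((2q+1)(θ+πℓ)/m) equals ((−1)^q/2^{2k+1})·C(2k+1, k−q). -/

import Mathlib

open Real Finset

lemma geom_aux (m : ℕ) (hm : 0 < m) (s : ℤ) :
    ∑ ℓ ∈ Finset.range m, Complex.exp (2 * Real.pi * Complex.I * s / m) ^ ℓ
      = if (m:ℤ) ∣ s then (m:ℂ) else 0 := by
  have hm' : (m:ℂ) ≠ 0 := Nat.cast_ne_zero.mpr hm.ne'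
  by_cases hd : (m:ℤ) ∣ s
  · obtain ⟨t, ht⟩ := hd
    have h1 : Complex.exp (2 * Real.pi * Complex.I * s / m) = 1 := by
      rw [ht]
      have : (2 * Real.pi * Complex.I * ((m:ℤ) * t : ℤ) / m : ℂ)
          = (t : ℤ) * (2 * Real.pi * Complex.I) := by
        push_cast; field_simp
      rw [this, Complex.exp_int_mul_two_pi_mul_I]
    simp only [h1, one_pow, Finset.sum_const, Finset.card_range, nsmul_eq_mul, mul_one]
    rw [if_pos ⟨t, ht⟩]
  · have hne : Complex.exp (2 * Real.pi * Complex.I * s / m) ≠ 1 := by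
      intro h
      rw [Complex.exp_eq_one_iff] at h
      obtain ⟨n, hn⟩ := h
      apply hd
      refine ⟨n, ?_⟩
      have hπ : (Real.pi : ℂ) ≠ 0 := by
        exact_mod_cast Real.pi_ne_zero
      have hI : (Complex.I : ℂ) ≠ 0 := Complex.I_ne_zero
      field_simp [hπ, hI, hm'] at hn
      have h2 : (2*(Real.pi:ℂ)*Complex.I) * s = (2*(Real.pi:ℂ)*Complex.I) * (m*n) := by
        linear_combination (2*(Real.pi:ℂ)*Complex.I) * hn
      have h3 := mul_left_cancel₀ (by simp [hπ, hI] : (2*(Real.pi:ℂ)*Complex.I) ≠ 0) h2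
      exact_mod_cast h3
    rw [geom_sum_eq hne]
    have : Complex.exp (2 * Real.pi * Complex.I * s / m) ^ m = 1 := by
      rw [← Complex.exp_nat_mul]
      have : (m : ℂ) * (2 * Real.pi * Complex.I * s / m) = s * (2*Real.pi*Complex.I) := by
        field_simp
      rw [this, Complex.exp_int_mul_two_pi_mul_I]
    simp [this, hd]

lemma sumB (θ : ℝ) (m : ℕ) (hm : 0 < m) (s : ℤ) (hs : s.natAbs < m) :
    ∑ ℓ ∈ Finset.range m, Complex.exp (2 * (((θ:ℂ) + Real.pi * ℓ) / m) * Complex.I) ^ s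
      = if s = 0 then (m:ℂ) else 0 := by
  have hm' : (m:ℂ) ≠ 0 := Nat.cast_ne_zero.mpr hm.ne'
  have h1 : ∀ ℓ ∈ Finset.range m, Complex.exp (2 * (((θ:ℂ) + Real.pi * ℓ) / m) * Complex.I) ^ s
      = Complex.exp (2 * s * θ * Complex.I / m) * Complex.exp (2 * Real.pi * Complex.I * s / m) ^ ℓ := by
    intro ℓ _
    rw [← Complex.exp_int_mul, ← Complex.exp_nat_mul, ← Complex.exp_add]
    congr 1
    field_simp
  rw [Finset.sum_congr rfl h1, ← Finset.mul_sum, geom_aux m hm s]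
  have hdvd : ((m:ℤ) ∣ s) ↔ s = 0 := by
    constructor
    · intro h
      by_contra h0
      have h2 : m ∣ s.natAbs := by
        have := Int.natAbs_dvd_natAbs.mpr h
        simpa using this
      have := Nat.le_of_dvd (Int.natAbs_pos.mpr h0) h2
      omega
    · rintro rfl; exact dvd_zero _
  by_cases h0 : s = 0
  · simp [h0, hdvd]
  · simp [h0, hdvd]

lemma term_expand (x : ℂ) (k q : ℕ) :
    Complex.sin x ^ (2*k+1) * Complex.sin (((2*q+1 : ℕ) : ℂ) * x)
      = (-1:ℂ)^(k+1) / 2^(2*k+2) *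
        ∑ i ∈ Finset.range (2*k+2), (-1) * (-1:ℂ)^i * ((2*k+1).choose i : ℂ) *
          (Complex.exp (2*x*Complex.I) ^ ((k:ℤ) - q - i)
            - Complex.exp (2*x*Complex.I) ^ ((k:ℤ) + q + 1 - i)) := by
  set A := Complex.exp (x * Complex.I) with hAdef
  have hA : A ≠ 0 := Complex.exp_ne_zero _
  have hu : Complex.exp (2*x*Complex.I) = A ^ (2:ℕ) := by
    rw [hAdef, ← Complex.exp_nat_mul]; ring_nf
  have hsin : Complex.sin x = (A⁻¹ - A) * Complex.I / 2 := by
    rw [hAdef, ← Complex.exp_neg]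
    simp [Complex.sin]
  have hsin2 : Complex.sin (((2*q+1 : ℕ):ℂ) * x) = ((A^(2*q+1))⁻¹ - A^(2*q+1)) * Complex.I / 2 := by
    rw [hAdef, ← Complex.exp_nat_mul, ← Complex.exp_neg]
    simp [Complex.sin]
    ring_nf
  rw [hsin, hsin2, hu]
  have hbin : (A⁻¹ - A) ^ (2*k+1)
      = ∑ i ∈ Finset.range (2*k+2), (A⁻¹)^i * (-A)^(2*k+1-i) * ((2*k+1).choose i : ℂ) := by
    rw [sub_eq_add_neg, add_pow]
  have hI : (Complex.I : ℂ)^(2*k+2) = (-1:ℂ)^(k+1) := by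
    rw [show 2*k+2 = 2*(k+1) by ring, pow_mul, Complex.I_sq]
  have hmain : (A⁻¹ - A)^(2*k+1) * ((A^(2*q+1))⁻¹ - A^(2*q+1))
      = ∑ i ∈ Finset.range (2*k+2), (-1) * (-1:ℂ)^i * ((2*k+1).choose i : ℂ) *
          ((A^(2:ℕ)) ^ ((k:ℤ) - q - i) - (A^(2:ℕ)) ^ ((k:ℤ) + q + 1 - i)) := by
    rw [hbin, Finset.sum_mul]
    refine Finset.sum_congr rfl ?_
    intro i hi
    rw [Finset.mem_range] at hi
    have hi' : i ≤ 2*k+1 := by omega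
    have e1 : (A⁻¹)^i = A ^ (-(i:ℤ)) := by rw [inv_pow, ← zpow_natCast, ← zpow_neg]
    have hy : (-1:ℂ)^(2*k+1-i) = -(-1:ℂ)^i := by
      have h : (-1:ℂ)^(2*k+1-i) * (-1:ℂ)^i = -1 := by
        rw [← pow_add, show 2*k+1-i+i = 2*k+1 by omega]
        exact Odd.neg_one_pow ⟨k, by ring⟩
      have h2 : ((-1:ℂ)^i) * ((-1:ℂ)^i) = 1 := by
        rw [← pow_add, ← two_mul, pow_mul]; norm_num
      linear_combination (-1:ℂ)^i * h - (-1:ℂ)^(2*k+1-i) * h2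
    have e2 : (-A)^(2*k+1-i) = (-(-1:ℂ)^i) * A ^ ((2*(k:ℤ)+1)-i) := by
      rw [neg_pow, hy, ← zpow_natCast A (2*k+1-i)]
      congr 2
      omega
    have e3 : (A^(2*q+1))⁻¹ = A ^ (-(2*(q:ℤ)+1)) := by
      rw [← zpow_natCast A (2*q+1), ← zpow_neg]
      congr 1 <;> push_cast <;> ring
    have e4 : A^(2*q+1) = A ^ ((2*(q:ℤ)+1)) := by
      rw [← zpow_natCast A (2*q+1)]
      congr 1 <;> push_cast <;> ring
    have e5 : (A^(2:ℕ)) ^ ((k:ℤ) - q - i) = A ^ (2*((k:ℤ) - q - i)) := by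
      rw [← zpow_natCast A 2, ← zpow_mul]; norm_num
    have e6 : (A^(2:ℕ)) ^ ((k:ℤ) + q + 1 - i) = A ^ (2*((k:ℤ) + q + 1 - i)) := by
      rw [← zpow_natCast A 2, ← zpow_mul]; norm_num
    have f1 : A^(-(i:ℤ)) * A^((2*(k:ℤ)+1)-i) * A^(-(2*(q:ℤ)+1)) = A^(2*((k:ℤ) - q - i)) := by
      rw [← zpow_add₀ hA, ← zpow_add₀ hA]; congr 1; ring
    have f2 : A^(-(i:ℤ)) * A^((2*(k:ℤ)+1)-i) * A^((2*(q:ℤ)+1)) = A^(2*((k:ℤ) + q + 1 - i)) := by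
      rw [← zpow_add₀ hA, ← zpow_add₀ hA]; congr 1; ring
    rw [e1, e2, e3, e4, e5, e6]
    linear_combination (-(-1:ℂ)^i * ((2*k+1).choose i : ℂ)) * f1
      - (-(-1:ℂ)^i * ((2*k+1).choose i : ℂ)) * f2
  calc ((A⁻¹ - A) * Complex.I / 2) ^ (2*k+1) * (((A^(2*q+1))⁻¹ - A^(2*q+1)) * Complex.I / 2)
      = ((A⁻¹ - A)^(2*k+1) * ((A^(2*q+1))⁻¹ - A^(2*q+1))) * (Complex.I^(2*k+2) / 2^(2*k+2)) := by
        rw [div_pow, mul_pow]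
        ring
    _ = (-1:ℂ)^(k+1) / 2^(2*k+2) * ∑ i ∈ Finset.range (2*k+2), (-1) * (-1:ℂ)^i * ((2*k+1).choose i : ℂ) *
          ((A^(2:ℕ)) ^ ((k:ℤ) - q - i) - (A^(2:ℕ)) ^ ((k:ℤ) + q + 1 - i)) := by
        rw [hmain, hI]; ring

theorem stmt_16 (θ : ℝ) (m q k : ℕ) (hqm : 2 * q + 1 < m) (h1 : q ≤ k) (h2 : k < m - q - 1) :
    (1 / (m : ℝ)) * ∑ ℓ ∈ Finset.range m,
        (Real.sin ((θ + Real.pi * ℓ) / m)) ^ (2 * k + 1)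
          * Real.sin ((2 * q + 1) * (θ + Real.pi * ℓ) / m)
      = ((-1) ^ q / 2 ^ (2 * k + 1)) * (Nat.choose (2 * k + 1) (k - q) : ℝ) := by
  have hm : 0 < m := by omega
  have hkq : k + q + 1 < m := by omega
  have hmR : (m:ℝ) ≠ 0 := Nat.cast_ne_zero.mpr hm.ne'
  have key : ∑ ℓ ∈ Finset.range m,
      (Complex.sin (((θ:ℂ) + Real.pi * ℓ) / m)) ^ (2*k+1)
        * Complex.sin (((2*q+1 : ℕ) : ℂ) * (((θ:ℂ) + Real.pi * ℓ) / m))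
      = ((-1:ℂ)^q / 2^(2*k+1)) * ((2*k+1).choose (k-q) : ℂ) * m := by
    -- expand each term
    have step1 : ∀ ℓ ∈ Finset.range m,
        (Complex.sin (((θ:ℂ) + Real.pi * ℓ) / m)) ^ (2*k+1)
          * Complex.sin (((2*q+1 : ℕ) : ℂ) * (((θ:ℂ) + Real.pi * ℓ) / m))
        = (-1:ℂ)^(k+1) / 2^(2*k+2) *
          ∑ i ∈ Finset.range (2*k+2), (-1) * (-1:ℂ)^i * ((2*k+1).choose i : ℂ) *
            (Complex.exp (2*((((θ:ℂ) + Real.pi * ℓ)) / m)*Complex.I) ^ ((k:ℤ) - q - i)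
              - Complex.exp (2*((((θ:ℂ) + Real.pi * ℓ)) / m)*Complex.I) ^ ((k:ℤ) + q + 1 - i)) :=
      fun ℓ _ => term_expand (((θ:ℂ) + Real.pi * ℓ) / m) k q
    rw [Finset.sum_congr rfl step1, ← Finset.mul_sum, Finset.sum_comm]
    have step2 : ∀ i ∈ Finset.range (2*k+2),
        ∑ ℓ ∈ Finset.range m, (-1) * (-1:ℂ)^i * ((2*k+1).choose i : ℂ) *
            (Complex.exp (2*((((θ:ℂ) + Real.pi * ℓ)) / m)*Complex.I) ^ ((k:ℤ) - q - i)
              - Complex.exp (2*((((θ:ℂ) + Real.pi * ℓ)) / m)*Complex.I) ^ ((k:ℤ) + q + 1 - i))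
        = (if i = k - q then (-1) * (-1:ℂ)^i * ((2*k+1).choose i : ℂ) * m else 0)
          - (if i = k + q + 1 then (-1) * (-1:ℂ)^i * ((2*k+1).choose i : ℂ) * m else 0) := by
      intro i hi
      rw [Finset.mem_range] at hi
      rw [← Finset.mul_sum]
      have hs1 : ((k:ℤ) - q - i).natAbs < m := by omega
      have hs2 : ((k:ℤ) + q + 1 - i).natAbs < m := by omega
      rw [Finset.sum_sub_distrib, sumB θ m hm _ hs1, sumB θ m hm _ hs2]
      have hc1 : ((k:ℤ) - q - i = 0) ↔ (i = k - q) := by omega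
      have hc2 : ((k:ℤ) + q + 1 - i = 0) ↔ (i = k + q + 1) := by omega
      simp only [hc1, hc2]
      by_cases hA : i = k - q <;> by_cases hB : i = k + q + 1
      · omega
      · simp only [if_pos hA, if_neg hB]; ring
      · simp only [if_neg hA, if_pos hB]; ring
      · simp only [if_neg hA, if_neg hB]; ring
    rw [Finset.sum_congr rfl step2, Finset.sum_sub_distrib,
        Finset.sum_ite_eq' (Finset.range (2*k+2)) (k-q), Finset.sum_ite_eq' (Finset.range (2*k+2)) (k+q+1)]
    rw [if_pos (by rw [Finset.mem_range]; omega), if_pos (by rw [Finset.mem_range]; omega)]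
    have hsymm : ((2*k+1).choose (k+q+1) : ℂ) = ((2*k+1).choose (k-q) : ℂ) := by
      norm_cast
      rw [← Nat.choose_symm (by omega : k+q+1 ≤ 2*k+1)]
      congr 1
      omega
    rw [hsymm]
    have hpow : (-1:ℂ)^(k+q+1) = -(-1:ℂ)^(k-q) := by
      have h2 : ((-1:ℂ)^(k-q)) * ((-1:ℂ)^(k-q)) = 1 := by
        rw [← pow_add, ← two_mul, pow_mul]; norm_num
      have h3 : (-1:ℂ)^(k+q+1) * (-1:ℂ)^(k-q) = (-1:ℂ)^(2*k+1) := by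
        rw [← pow_add]; congr 1; omega
      have h4 : (-1:ℂ)^(2*k+1) = -1 := Odd.neg_one_pow ⟨k, by ring⟩
      linear_combination (-1:ℂ)^(k-q) * h3 + (-1:ℂ)^(k-q) * h4 - (-1:ℂ)^(k+q+1) * h2
    rw [hpow]
    have hfinal : (-1:ℂ)^(k+1) * (-1:ℂ)^(k-q) = (-1:ℂ)^(2*k+1-q) := by
      rw [← pow_add]; congr 1; omega
    have hq2 : (-1:ℂ)^(2*k+1-q) = -(-1:ℂ)^q := by
      have h2 : ((-1:ℂ)^q) * ((-1:ℂ)^q) = 1 := by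
        rw [← pow_add, ← two_mul, pow_mul]; norm_num
      have h3 : (-1:ℂ)^(2*k+1-q) * (-1:ℂ)^q = (-1:ℂ)^(2*k+1) := by
        rw [← pow_add]; congr 1; omega
      have h4 : (-1:ℂ)^(2*k+1) = -1 := Odd.neg_one_pow ⟨k, by ring⟩
      linear_combination (-1:ℂ)^q * h3 + (-1:ℂ)^q * h4 - (-1:ℂ)^(2*k+1-q) * h2
    have h2pow : (2:ℂ)^(2*k+2) = 2 * 2^(2*k+1) := by rw [pow_succ]; ring
    rw [h2pow]
    have h2ne : (2:ℂ)^(2*k+1) ≠ 0 := pow_ne_zero _ two_ne_zero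
    have habc : (-1:ℂ)^k * (-1:ℂ)^(k-q) = (-1:ℂ)^q := by linear_combination -hfinal - hq2
    field_simp
    linear_combination (2 * ((2*k+1).choose (k-q) : ℂ) * m) * habc
  rw [one_div, inv_mul_eq_div, div_eq_iff hmR, ← Complex.ofReal_inj]
  push_cast
  push_cast at key
  simp only [mul_div_assoc]
  exact key
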